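/- Let T be a d × M balanced table and i < j ≤ M. Then Δ_T = (−1)^ℓ Δ_{(i,j)T}, where (i,j)T is T with columns i and j swapped and ℓ = Σ_{m=1}^d ( #{c ∈ [i,j] : T_{m,i} = T_{m,c}} + #{c ∈ [i,j] : T_{m,j} = T_{m,c}} − δ_{T_{m,i},T_{m,j}} ). -/
import Mathlib


open scoped Classical

/-- Sign contribution of one row `t` of a balanced table with `K` blocks: the product, over
the blocks of positions carrying equal entry `v ∈ {0,…,K−1}`, of the sign of the sequence of
`σ`-values read along the block in increasing position order (`0` if this sequence is not a
permutation of `[n_i]`); the sign of a permutation is computed as `(−1)^inversions`. -/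
noncomputable def rowSgn (M ni K : ℕ) (t : Fin M → ℕ) (σ : Fin M → Fin ni) : ℤ :=
  ∏ v ∈ Finset.range K,
    if ∀ x : Fin ni, ∃! p : Fin M, t p = v ∧ σ p = x then
      (-1 : ℤ) ^ Set.ncard {pq : Fin M × Fin M |
        pq.1 < pq.2 ∧ t pq.1 = v ∧ t pq.2 = v ∧ σ pq.2 < σ pq.1}
    else 0

/-- The invariant polynomial `Δ_T` of a `d × M` balanced table `T` (with entries of row `i`
in `{0,…,M/n_i − 1}`), as a function of hypermatrices `X` of format `n_1 × ⋯ × n_d`: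
`Δ_T(X) = Σ_{σ_1,…,σ_d} ∏_i sgn_{T_i}(σ_i) · ∏_{p=1}^M X_{σ_1(p),…,σ_d(p)}`. -/
noncomputable def Delta (d M : ℕ) (n : Fin d → ℕ) (T : Fin d → Fin M → ℕ)
    (X : ((i : Fin d) → Fin (n i)) → ℂ) : ℂ :=
  ∑ σ : (i : Fin d) → Fin M → Fin (n i),
    ((∏ i, rowSgn M (n i) (M / n i) (T i) (σ i) : ℤ) : ℂ) *
      ∏ p : Fin M, X fun i => σ i p

/-- `T` is a `d × M` balanced table for the format `n`: row `i` has entries in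
`{0,…,M/n_i − 1}` and contains each such value exactly `n i` times. -/
def IsBalanced (d M : ℕ) (n : Fin d → ℕ) (T : Fin d → Fin M → ℕ) : Prop :=
  ∀ i : Fin d, (∀ p, T i p < M / n i) ∧
    ∀ v : ℕ, v < M / n i → Set.ncard {p : Fin M | T i p = v} = n i

lemma ncard_eq_filter_card {M : ℕ} (p : Fin M × Fin M → Prop) :
    Set.ncard {x | p x} = (Finset.univ.filter p).card := by
  rw [← Set.ncard_coe_finset]; congr 1; ext x; simp

noncomputable def invCount {M ni : ℕ} (t : Fin M → ℕ) (σ : Fin M → Fin ni) : ℕ :=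
  (Finset.univ.filter fun pq : Fin M × Fin M =>
    pq.1 < pq.2 ∧ t pq.1 = t pq.2 ∧ σ pq.2 < σ pq.1).card

lemma rowSgn_eq {M ni : ℕ} (K : ℕ) (t : Fin M → ℕ) (σ : Fin M → Fin ni)
    (hK : ∀ p, t p < K) :
    rowSgn M ni K t σ =
      if ∀ v < K, ∀ x : Fin ni, ∃! p : Fin M, t p = v ∧ σ p = x then
        (-1 : ℤ) ^ invCount t σ else 0 := by
  split_ifs with h
  · unfold rowSgn
    have hfib : invCount t σ = ∑ v ∈ Finset.range K,
        ((Finset.univ.filter fun pq : Fin M × Fin M =>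
          pq.1 < pq.2 ∧ t pq.1 = t pq.2 ∧ σ pq.2 < σ pq.1).filter
            fun pq => t pq.1 = v).card :=
      Finset.card_eq_sum_card_fiberwise (f := fun pq : Fin M × Fin M => t pq.1)
        (fun pq hpq => Finset.mem_range.2 (hK pq.1))
    rw [hfib, ← Finset.prod_pow_eq_pow_sum]
    apply Finset.prod_congr rfl
    intro v hv
    rw [if_pos (h v (Finset.mem_range.1 hv))]
    rw [ncard_eq_filter_card]
    congr 1
    apply congrArg Finset.card
    ext pq
    simp only [Finset.mem_filter, Finset.mem_univ, true_and]
    constructor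
    · rintro ⟨h1, h2, h3, h4⟩; exact ⟨⟨h1, h2.trans h3.symm, h4⟩, h2⟩
    · rintro ⟨⟨h1, h2, h4⟩, h3⟩; exact ⟨h1, h3, h2 ▸ h3, h4⟩
  · push_neg at h
    obtain ⟨v, hv, x, hx⟩ := h
    unfold rowSgn
    exact Finset.prod_eq_zero (Finset.mem_range.2 hv)
      (by rw [if_neg (by intro hc; exact hx (hc x))])

lemma swap_rev_iff {M : ℕ} (i j : Fin M) (hij : i < j) (p q : Fin M) (hpq : p < q) :
    Equiv.swap i j q < Equiv.swap i j p ↔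
      (p = i ∧ q = j) ∨ (p = i ∧ i < q ∧ q < j) ∨ (i < p ∧ p < j ∧ q = j) := by
  simp only [Equiv.swap_apply_def]
  split_ifs <;>
    simp only [Fin.lt_def, Fin.ext_iff] at * <;> omega

noncomputable def revCount {M : ℕ} (t : Fin M → ℕ) (i j : Fin M) : ℕ :=
  (Finset.univ.filter fun pq : Fin M × Fin M =>
    pq.1 < pq.2 ∧ t pq.1 = t pq.2 ∧ Equiv.swap i j pq.2 < Equiv.swap i j pq.1).card

lemma revCount_eq {M : ℕ} (t : Fin M → ℕ) (i j : Fin M) (hij : i < j) :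
    revCount t i j = (if t i = t j then 1 else 0) +
      ((Finset.Ioo i j).filter fun c => t i = t c).card +
      ((Finset.Ioo i j).filter fun c => t c = t j).card := by
  unfold revCount
  have hpred : ∀ pq : Fin M × Fin M,
      (pq.1 < pq.2 ∧ t pq.1 = t pq.2 ∧ Equiv.swap i j pq.2 < Equiv.swap i j pq.1) ↔
      ((pq.1 = i ∧ pq.2 = j ∧ t i = t j) ∨
        ((pq.1 = i ∧ i < pq.2 ∧ pq.2 < j ∧ t i = t pq.2) ∨
          (i < pq.1 ∧ pq.1 < j ∧ pq.2 = j ∧ t pq.1 = t j))) := by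
    rintro ⟨p, q⟩
    dsimp only
    constructor
    · rintro ⟨h1, h2, h3⟩
      rcases (swap_rev_iff i j hij p q h1).1 h3 with ⟨a, b⟩ | ⟨a, b, c⟩ | ⟨a, b, c⟩
      · exact Or.inl ⟨a, b, a ▸ b ▸ h2⟩
      · exact Or.inr (Or.inl ⟨a, b, c, a ▸ h2⟩)
      · exact Or.inr (Or.inr ⟨a, b, c, c ▸ h2⟩)
    · rintro (⟨a, b, c⟩ | ⟨a, b, c, e⟩ | ⟨a, b, c, e⟩)
      · have hpq : p < q := by rw [a, b]; exact hij
        exact ⟨hpq, by rw [a, b]; exact c, (swap_rev_iff i j hij p q hpq).2 (Or.inl ⟨a, b⟩)⟩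
      · have hpq : p < q := by rw [a]; exact b
        exact ⟨hpq, by rw [a]; exact e,
          (swap_rev_iff i j hij p q hpq).2 (Or.inr (Or.inl ⟨a, b, c⟩))⟩
      · have hpq : p < q := by rw [c]; exact b
        exact ⟨hpq, by rw [c]; exact e,
          (swap_rev_iff i j hij p q hpq).2 (Or.inr (Or.inr ⟨a, b, c⟩))⟩
  rw [Finset.filter_congr (fun pq _ => hpred pq)]
  rw [Finset.filter_or, Finset.filter_or]
  have hd23 : Disjoint
      (Finset.univ.filter fun pq : Fin M × Fin M =>
        pq.1 = i ∧ i < pq.2 ∧ pq.2 < j ∧ t i = t pq.2)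
      (Finset.univ.filter fun pq : Fin M × Fin M =>
        i < pq.1 ∧ pq.1 < j ∧ pq.2 = j ∧ t pq.1 = t j) := by
    rw [Finset.disjoint_left]
    rintro pq hpq hpq'
    simp only [Finset.mem_filter] at hpq hpq'
    exact absurd (hpq.2.1 ▸ hpq'.2.1) (lt_irrefl i)
  have hd1 : Disjoint
      (Finset.univ.filter fun pq : Fin M × Fin M => pq.1 = i ∧ pq.2 = j ∧ t i = t j)
      ((Finset.univ.filter fun pq : Fin M × Fin M =>
        pq.1 = i ∧ i < pq.2 ∧ pq.2 < j ∧ t i = t pq.2) ∪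
       (Finset.univ.filter fun pq : Fin M × Fin M =>
        i < pq.1 ∧ pq.1 < j ∧ pq.2 = j ∧ t pq.1 = t j)) := by
    rw [Finset.disjoint_left]
    rintro pq hpq hpq'
    simp only [Finset.mem_union, Finset.mem_filter] at hpq hpq'
    rcases hpq' with ⟨_, _, _, b, _⟩ | ⟨_, a, _⟩
    · exact absurd (hpq.2.2.1 ▸ b) (lt_irrefl j)
    · exact absurd (hpq.2.1 ▸ a) (lt_irrefl i)
  rw [Finset.card_union_of_disjoint hd1, Finset.card_union_of_disjoint hd23]
  have hc1 : (Finset.univ.filter fun pq : Fin M × Fin M =>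
      pq.1 = i ∧ pq.2 = j ∧ t i = t j).card = if t i = t j then 1 else 0 := by
    by_cases h : t i = t j
    · rw [if_pos h, Finset.card_eq_one]
      refine ⟨(i, j), ?_⟩
      ext pq
      simp only [Finset.mem_filter, Finset.mem_univ, true_and, Finset.mem_singleton,
        Prod.ext_iff]
      exact ⟨fun ⟨a, b, _⟩ => ⟨a, b⟩, fun ⟨a, b⟩ => ⟨a, b, h⟩⟩
    · rw [if_neg h, Finset.card_eq_zero]
      ext pq
      simp only [Finset.mem_filter, Finset.mem_univ, true_and, Finset.notMem_empty,
        iff_false]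
      rintro ⟨_, _, hc⟩; exact h hc
  have hc2 : (Finset.univ.filter fun pq : Fin M × Fin M =>
      pq.1 = i ∧ i < pq.2 ∧ pq.2 < j ∧ t i = t pq.2).card =
      ((Finset.Ioo i j).filter fun c => t i = t c).card := by
    have : (Finset.univ.filter fun pq : Fin M × Fin M =>
        pq.1 = i ∧ i < pq.2 ∧ pq.2 < j ∧ t i = t pq.2) =
        ((Finset.Ioo i j).filter fun c => t i = t c).image (fun c => (i, c)) := by
      ext pq
      simp only [Finset.mem_filter, Finset.mem_univ, true_and, Finset.mem_image,
        Finset.mem_Ioo, Prod.ext_iff]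
      constructor
      · rintro ⟨a, b, c, e⟩; exact ⟨pq.2, ⟨⟨b, c⟩, e⟩, a.symm, rfl⟩
      · rintro ⟨c, ⟨⟨b1, b2⟩, e⟩, h1, h2⟩; exact ⟨h1.symm, h2 ▸ b1, h2 ▸ b2, h2 ▸ e⟩
    rw [this, Finset.card_image_of_injective _ (fun a b h => (Prod.ext_iff.1 h).2)]
  have hc3 : (Finset.univ.filter fun pq : Fin M × Fin M =>
      i < pq.1 ∧ pq.1 < j ∧ pq.2 = j ∧ t pq.1 = t j).card =
      ((Finset.Ioo i j).filter fun c => t c = t j).card := by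
    have : (Finset.univ.filter fun pq : Fin M × Fin M =>
        i < pq.1 ∧ pq.1 < j ∧ pq.2 = j ∧ t pq.1 = t j) =
        ((Finset.Ioo i j).filter fun c => t c = t j).image (fun c => (c, j)) := by
      ext pq
      simp only [Finset.mem_filter, Finset.mem_univ, true_and, Finset.mem_image,
        Finset.mem_Ioo, Prod.ext_iff]
      constructor
      · rintro ⟨a, b, c, e⟩; exact ⟨pq.1, ⟨⟨a, b⟩, e⟩, rfl, c.symm⟩
      · rintro ⟨c, ⟨⟨b1, b2⟩, e⟩, h1, h2⟩; exact ⟨h1 ▸ b1, h1 ▸ b2, h2.symm, h1 ▸ e⟩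
    rw [this, Finset.card_image_of_injective _ (fun a b h => (Prod.ext_iff.1 h).1)]
  rw [hc1, hc2, hc3]
  ring

lemma ell_eq {M : ℕ} (t : Fin M → ℕ) (i j : Fin M) (hij : i < j) :
    ((Finset.Icc i j).filter fun c => t i = t c).card +
      ((Finset.Icc i j).filter fun c => t j = t c).card -
      (if t i = t j then 1 else 0) = revCount t i j + 2 := by
  have hIcc : Finset.Icc i j = insert j (insert i (Finset.Ioo i j)) := by
    rw [Finset.Ioo_insert_left hij, Finset.Ico_insert_right hij.le]
  have hiIoo : i ∉ Finset.Ioo i j := Finset.left_notMem_Ioo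
  have hjIoo : j ∉ Finset.Ioo i j := Finset.right_notMem_Ioo
  have hcomm : ((Finset.Ioo i j).filter fun c => t j = t c) =
      ((Finset.Ioo i j).filter fun c => t c = t j) :=
    Finset.filter_congr fun c _ => eq_comm
  have hci : ∀ F : Finset (Fin M), F ⊆ Finset.Ioo i j →
      (insert i F).card = F.card + 1 := fun F hF =>
    Finset.card_insert_of_notMem fun hc => hiIoo (hF hc)
  have hcj' : ∀ F : Finset (Fin M), F ⊆ Finset.Ioo i j →
      (insert j F).card = F.card + 1 := fun F hF =>
    Finset.card_insert_of_notMem fun hc => hjIoo (hF hc)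
  have hcj : ∀ F : Finset (Fin M), F ⊆ Finset.Ioo i j →
      (insert j (insert i F)).card = F.card + 2 := by
    intro F hF
    rw [Finset.card_insert_of_notMem, hci F hF]
    intro hc
    rcases Finset.mem_insert.1 hc with hc | hc
    · exact hij.ne' hc
    · exact hjIoo (hF hc)
  rw [revCount_eq t i j hij]
  by_cases hδ : t i = t j
  · have ha : (Finset.Icc i j).filter (fun c => t i = t c) =
        insert j (insert i ((Finset.Ioo i j).filter fun c => t i = t c)) := by
      rw [hIcc, Finset.filter_insert, if_pos hδ, Finset.filter_insert, if_pos rfl]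
    have hb : (Finset.Icc i j).filter (fun c => t j = t c) =
        insert j (insert i ((Finset.Ioo i j).filter fun c => t j = t c)) := by
      rw [hIcc, Finset.filter_insert, if_pos rfl, Finset.filter_insert, if_pos hδ.symm]
    rw [ha, hb, if_pos hδ, hcj _ (Finset.filter_subset _ _),
      hcj _ (Finset.filter_subset _ _), hcomm]
    omega
  · have ha : (Finset.Icc i j).filter (fun c => t i = t c) =
        insert i ((Finset.Ioo i j).filter fun c => t i = t c) := by
      rw [hIcc, Finset.filter_insert, if_neg hδ, Finset.filter_insert, if_pos rfl]
    have hb : (Finset.Icc i j).filter (fun c => t j = t c) =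
        insert j ((Finset.Ioo i j).filter fun c => t j = t c) := by
      rw [hIcc, Finset.filter_insert, if_pos rfl, Finset.filter_insert,
        if_neg fun h => hδ h.symm]
    rw [ha, hb, if_neg hδ, hci _ (Finset.filter_subset _ _),
      hcj' _ (Finset.filter_subset _ _), hcomm]
    omega

lemma invCount_swap {M ni : ℕ} (t : Fin M → ℕ) (σ : Fin M → Fin ni) (i j : Fin M)
    (hij : i < j) (hinj : ∀ p q : Fin M, t p = t q → σ p = σ q → p = q) :
    ∃ B : ℕ, invCount (fun p => t (Equiv.swap i j p)) (fun p => σ (Equiv.swap i j p))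
        + invCount t σ = 2 * B + revCount t i j := by
  set s : Equiv.Perm (Fin M) := Equiv.swap i j with hs
  have hss : ∀ p, s (s p) = p := fun p => Equiv.swap_apply_self i j p
  set F1 : Finset (Fin M × Fin M) := Finset.univ.filter fun pq =>
    pq.1 < pq.2 ∧ t pq.1 = t pq.2 ∧ ¬(s pq.2 < s pq.1) ∧ σ pq.2 < σ pq.1 with hF1
  set F2 : Finset (Fin M × Fin M) := Finset.univ.filter fun pq =>
    pq.1 < pq.2 ∧ t pq.1 = t pq.2 ∧ s pq.2 < s pq.1 ∧ σ pq.1 < σ pq.2 with hF2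
  set F3 : Finset (Fin M × Fin M) := Finset.univ.filter fun pq =>
    pq.1 < pq.2 ∧ t pq.1 = t pq.2 ∧ s pq.2 < s pq.1 ∧ σ pq.2 < σ pq.1 with hF3
  refine ⟨F1.card, ?_⟩
  -- (1) : invCount of the swapped row equals F1.card + F2.card
  have h1 : invCount (fun p => t (s p)) (fun p => σ (s p)) = F1.card + F2.card := by
    have hbij : invCount (fun p => t (s p)) (fun p => σ (s p)) =
        (Finset.univ.filter fun pq : Fin M × Fin M =>
          pq.1 < pq.2 ∧ t pq.1 = t pq.2 ∧
            (if s pq.2 < s pq.1 then σ pq.1 < σ pq.2 else σ pq.2 < σ pq.1)).card := by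
      unfold invCount
      apply Finset.card_bij' (i := fun pq _ =>
          if s pq.1 < s pq.2 then (s pq.1, s pq.2) else (s pq.2, s pq.1))
        (j := fun pq _ =>
          if s pq.1 < s pq.2 then (s pq.1, s pq.2) else (s pq.2, s pq.1))
      · -- hi : maps into target
        rintro ⟨p, q⟩ hpq
        simp only [Finset.mem_filter, Finset.mem_univ, true_and] at hpq ⊢
        obtain ⟨h1, h2, h3⟩ := hpq
        rcases lt_trichotomy (s p) (s q) with hlt | heq | hgt
        · rw [if_pos hlt]
          refine ⟨hlt, h2, ?_⟩
          rw [if_neg (by rw [hss, hss]; exact not_lt.2 h1.le)]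
          exact h3
        · exact absurd (s.injective heq) h1.ne
        · rw [if_neg (not_lt.2 hgt.le)]
          refine ⟨hgt, h2.symm, ?_⟩
          rw [if_pos (by rw [hss, hss]; exact h1)]
          exact h3
      · -- hj : maps back
        rintro ⟨a, b⟩ hab
        simp only [Finset.mem_filter, Finset.mem_univ, true_and] at hab ⊢
        obtain ⟨h1, h2, h3⟩ := hab
        rcases lt_trichotomy (s a) (s b) with hlt | heq | hgt
        · rw [if_pos hlt]
          rw [if_neg (not_lt.2 hlt.le)] at h3
          exact ⟨hlt, by rw [hss, hss]; exact h2, by rw [hss, hss]; exact h3⟩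
        · exact absurd (s.injective heq) h1.ne
        · rw [if_neg (not_lt.2 hgt.le)]
          rw [if_pos hgt] at h3
          exact ⟨hgt, by rw [hss, hss]; exact h2.symm, by rw [hss, hss]; exact h3⟩
      · -- left inverse
        rintro ⟨p, q⟩ hpq
        simp only [Finset.mem_filter, Finset.mem_univ, true_and] at hpq
        rcases lt_trichotomy (s p) (s q) with hlt | heq | hgt
        · rw [if_pos hlt, if_pos (by rw [hss, hss]; exact hpq.1)]
          simp [hss]
        · exact absurd (s.injective heq) hpq.1.ne
        · rw [if_neg (not_lt.2 hgt.le), if_neg (by rw [hss, hss]; exact not_lt.2 hpq.1.le)]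
          simp [hss]
      · -- right inverse
        rintro ⟨a, b⟩ hab
        simp only [Finset.mem_filter, Finset.mem_univ, true_and] at hab
        rcases lt_trichotomy (s a) (s b) with hlt | heq | hgt
        · rw [if_pos hlt, if_pos (by rw [hss, hss]; exact hab.1)]
          simp [hss]
        · exact absurd (s.injective heq) hab.1.ne
        · rw [if_neg (not_lt.2 hgt.le), if_neg (by rw [hss, hss]; exact not_lt.2 hab.1.le)]
          simp [hss]
    rw [hbij]
    have : (Finset.univ.filter fun pq : Fin M × Fin M =>
        pq.1 < pq.2 ∧ t pq.1 = t pq.2 ∧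
          (if s pq.2 < s pq.1 then σ pq.1 < σ pq.2 else σ pq.2 < σ pq.1)) = F1 ∪ F2 := by
      rw [hF1, hF2, ← Finset.filter_or]
      apply Finset.filter_congr
      rintro pq _
      by_cases hrev : s pq.2 < s pq.1
      · rw [if_pos hrev]; tauto
      · rw [if_neg hrev]; tauto
    rw [this, Finset.card_union_of_disjoint]
    rw [Finset.disjoint_left]
    rintro pq hpq hpq'
    simp only [hF1, hF2, Finset.mem_filter, Finset.mem_univ, true_and] at hpq hpq'
    exact hpq.2.2.1 hpq'.2.2.1
  -- (2) : invCount t σ = F1.card + F3.card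
  have h2 : invCount t σ = F1.card + F3.card := by
    unfold invCount
    have : (Finset.univ.filter fun pq : Fin M × Fin M =>
        pq.1 < pq.2 ∧ t pq.1 = t pq.2 ∧ σ pq.2 < σ pq.1) = F1 ∪ F3 := by
      rw [hF1, hF3, ← Finset.filter_or]
      apply Finset.filter_congr
      rintro pq _
      by_cases hrev : s pq.2 < s pq.1 <;> tauto
    rw [this, Finset.card_union_of_disjoint]
    rw [Finset.disjoint_left]
    rintro pq hpq hpq'
    simp only [hF1, hF3, Finset.mem_filter, Finset.mem_univ, true_and] at hpq hpq'
    exact hpq.2.2.1 hpq'.2.2.1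
  -- (3) : revCount t i j = F3.card + F2.card
  have h3 : revCount t i j = F3.card + F2.card := by
    unfold revCount
    have : (Finset.univ.filter fun pq : Fin M × Fin M =>
        pq.1 < pq.2 ∧ t pq.1 = t pq.2 ∧ s pq.2 < s pq.1) = F3 ∪ F2 := by
      rw [hF3, hF2, ← Finset.filter_or]
      apply Finset.filter_congr
      rintro pq _
      constructor
      · rintro ⟨a, b, c⟩
        rcases lt_trichotomy (σ pq.2) (σ pq.1) with h | h | h
        · exact Or.inl ⟨a, b, c, h⟩
        · exact absurd (hinj _ _ b (h.symm ▸ rfl)) a.ne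
        · exact Or.inr ⟨a, b, c, h⟩
      · rintro (⟨a, b, c, _⟩ | ⟨a, b, c, _⟩) <;> exact ⟨a, b, c⟩
    rw [this, Finset.card_union_of_disjoint]
    rw [Finset.disjoint_left]
    rintro pq hpq hpq'
    simp only [hF3, hF2, Finset.mem_filter, Finset.mem_univ, true_and] at hpq hpq'
    exact absurd (hpq.2.2.2.trans hpq'.2.2.2) (lt_irrefl _)
  rw [h1, h2, h3]
  ring

lemma rowSgn_swap {M ni : ℕ} (K : ℕ) (t : Fin M → ℕ) (σ : Fin M → Fin ni)
    (hK : ∀ p, t p < K) (i j : Fin M) (hij : i < j) :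
    rowSgn M ni K (fun p => t (Equiv.swap i j p)) (fun p => σ (Equiv.swap i j p)) =
      (-1 : ℤ) ^ (((Finset.Icc i j).filter fun c => t i = t c).card +
        ((Finset.Icc i j).filter fun c => t j = t c).card -
        if t i = t j then 1 else 0) * rowSgn M ni K t σ := by
  rw [rowSgn_eq K _ _ (fun p => hK _), rowSgn_eq K t σ hK]
  have hcond : (∀ v < K, ∀ x : Fin ni, ∃! p : Fin M,
      t (Equiv.swap i j p) = v ∧ σ (Equiv.swap i j p) = x)
      ↔ (∀ v < K, ∀ x : Fin ni, ∃! p : Fin M, t p = v ∧ σ p = x) := by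
    refine forall₂_congr fun v hv => forall_congr' fun x => ?_
    have := Equiv.existsUnique_congr_left (p := fun p => t p = v ∧ σ p = x)
      (Equiv.swap i j)
    rw [Equiv.symm_swap] at this
    exact this.symm
  rw [ell_eq t i j hij]
  split_ifs with h h' h'
  · have hinj : ∀ p q : Fin M, t p = t q → σ p = σ q → p = q := by
      intro p q hteq hσeq
      exact (h' (t p) (hK p) (σ p)).unique ⟨rfl, rfl⟩ ⟨hteq.symm, hσeq.symm⟩
    obtain ⟨B, hB⟩ := invCount_swap t σ i j hij hinj
    have key : ((-1 : ℤ) ^ invCount (fun p => t (Equiv.swap i j p))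
        (fun p => σ (Equiv.swap i j p))) * (-1) ^ invCount t σ =
        (-1) ^ revCount t i j := by
      rw [← pow_add, hB, pow_add, pow_mul]
      norm_num
    have hNN : ((-1 : ℤ) ^ invCount t σ) * (-1) ^ invCount t σ = 1 := by
      rw [← pow_add]
      exact Even.neg_one_pow ⟨invCount t σ, rfl⟩
    calc (-1 : ℤ) ^ invCount (fun p => t (Equiv.swap i j p)) (fun p => σ (Equiv.swap i j p))
        = ((-1 : ℤ) ^ invCount (fun p => t (Equiv.swap i j p))
            (fun p => σ (Equiv.swap i j p)) * (-1) ^ invCount t σ) * (-1) ^ invCount t σ := by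
          rw [mul_assoc, hNN, mul_one]
      _ = (-1) ^ revCount t i j * (-1) ^ invCount t σ := by rw [key]
      _ = (-1) ^ (revCount t i j + 2) * (-1) ^ invCount t σ := by rw [pow_add]; norm_num
  · exact absurd (hcond.1 h) h'
  · exact absurd (hcond.2 h') h
  · rw [mul_zero]

/-- Column swap: for a balanced table `T` and `i < j`,
`Δ_T = (−1)^ℓ Δ_{(i,j)T}` where `ℓ = Σ_m (#{c ∈ [i,j] : T_{m,i} = T_{m,c}} +
#{c ∈ [i,j] : T_{m,j} = T_{m,c}} − δ_{T_{m,i},T_{m,j}})`. -/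
theorem delta_column_swap (d M : ℕ) (n : Fin d → ℕ) (T : Fin d → Fin M → ℕ)
    (hT : IsBalanced d M n T) (i j : Fin M) (hij : i < j) :
    ∀ X : ((i : Fin d) → Fin (n i)) → ℂ,
      Delta d M n T X =
        (-1 : ℂ) ^ (∑ m : Fin d,
            (((Finset.Icc i j).filter fun c => T m i = T m c).card +
              ((Finset.Icc i j).filter fun c => T m j = T m c).card -
              if T m i = T m j then 1 else 0)) *
          Delta d M n (fun m p => T m (Equiv.swap i j p)) X := by
  intro X
  have hK : ∀ m : Fin d, ∀ p, T m p < M / n m := fun m => (hT m).1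
  set L : ℕ := ∑ m : Fin d,
      (((Finset.Icc i j).filter fun c => T m i = T m c).card +
        ((Finset.Icc i j).filter fun c => T m j = T m c).card -
        if T m i = T m j then 1 else 0) with hL
  have hinv : Function.Involutive
      (fun (σ : (m : Fin d) → Fin M → Fin (n m)) => fun m p => σ m (Equiv.swap i j p)) := by
    intro σ; funext m p; simp
  have key : Delta d M n (fun m p => T m (Equiv.swap i j p)) X =
      (-1 : ℂ) ^ L * Delta d M n T X := by
    have step1 : Delta d M n (fun m p => T m (Equiv.swap i j p)) X
        = ∑ σ : (m : Fin d) → Fin M → Fin (n m),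
            ((∏ m, rowSgn M (n m) (M / n m) (fun p => T m (Equiv.swap i j p))
                (fun p => σ m (Equiv.swap i j p)) : ℤ) : ℂ)
              * ∏ p, X fun m => σ m (Equiv.swap i j p) := by
      rw [Delta]
      exact (hinv.bijective.sum_comp _).symm
    have step2 : ∀ σ : (m : Fin d) → Fin M → Fin (n m),
        ((∏ m, rowSgn M (n m) (M / n m) (fun p => T m (Equiv.swap i j p))
            (fun p => σ m (Equiv.swap i j p)) : ℤ) : ℂ)
          * ∏ p, X (fun m => σ m (Equiv.swap i j p))
        = (-1 : ℂ) ^ L *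
            (((∏ m, rowSgn M (n m) (M / n m) (T m) (σ m) : ℤ) : ℂ) *
              ∏ p, X fun m => σ m p) := by
      intro σ
      have hrow : (∏ m, rowSgn M (n m) (M / n m) (fun p => T m (Equiv.swap i j p))
          (fun p => σ m (Equiv.swap i j p)))
          = (-1 : ℤ) ^ L * ∏ m, rowSgn M (n m) (M / n m) (T m) (σ m) := by
        rw [Finset.prod_congr rfl
          (fun m _ => rowSgn_swap (M / n m) (T m) (σ m) (hK m) i j hij)]
        rw [Finset.prod_mul_distrib, Finset.prod_pow_eq_pow_sum]
      have hX : (∏ p, X fun m => σ m (Equiv.swap i j p)) = ∏ p, X fun m => σ m p :=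
        Equiv.prod_comp (Equiv.swap i j) (fun p => X fun m => σ m p)
      rw [hrow, hX]
      push_cast
      ring
    rw [step1, Finset.sum_congr rfl (fun σ _ => step2 σ), ← Finset.mul_sum]
    rw [Delta]
  have hone : (-1 : ℂ) ^ L * (-1 : ℂ) ^ L = 1 := by
    rw [← pow_add]
    exact Even.neg_one_pow ⟨L, rfl⟩
  rw [key, ← mul_assoc, hone, one_mul]
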